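/- Let (A, ·, ε, α_A) be a commutative Hom-associative color algebra (i.e. a Hom-associative color algebra with a·b = ε(a,b) b·a for all homogeneous a, b) and let (P, ∗, [·,·], ε, α_P) be a Hom-Poisson color algebra, both graded by the same abelian group G with the same bicharacter ε. Then the tensor product A ⊗ P, graded by (A ⊗ P)_g = ⊕_{a+x=g} A_a ⊗ P_x, is a Hom-Poisson color algebra with the even linear map α(a ⊗ x) = α_A(a) ⊗ α_P(x), the multiplication (a ⊗ x)(b ⊗ y) = ε(x,b) (a·b) ⊗ (x ∗ y), and the bracket {a ⊗ x, b ⊗ y} = ε(x,b) (a·b) ⊗ [x,y], for all homogeneous a, b ∈ A and x, y ∈ P (where ε(x,b) is evaluated at the degrees of x and b). -/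

import Mathlib

open scoped TensorProduct

variable {K G V : Type*} [Field K] [AddCommGroup G] [AddCommGroup V] [Module K V]

/-- A skew-symmetric bicharacter on the abelian group `G` with values in `K \ {0}`. -/
def IsBicharacter (ε : G → G → K) : Prop :=
  (∀ a b, ε a b ≠ 0) ∧ (∀ a b, ε a b * ε b a = 1) ∧
    (∀ a b c, ε a (b + c) = ε a b * ε a c) ∧
    (∀ a b c, ε (a + b) c = ε a c * ε b c)

/-- `μ` is an even bilinear map for the grading `ℬ`: `μ(ℬ a, ℬ b) ⊆ ℬ (a + b)`. -/
def IsEvenBilinear (ℬ : G → Submodule K V) (μ : V →ₗ[K] V →ₗ[K] V) : Prop :=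
  ∀ ⦃a b : G⦄ ⦃x y : V⦄, x ∈ ℬ a → y ∈ ℬ b → μ x y ∈ ℬ (a + b)

/-- `α` is an even linear map for the grading `ℬ`: `α(ℬ a) ⊆ ℬ a`. -/
def IsEvenLinear (ℬ : G → Submodule K V) (α : V →ₗ[K] V) : Prop :=
  ∀ ⦃a : G⦄ ⦃x : V⦄, x ∈ ℬ a → α x ∈ ℬ a

/-- `(V, μ, ε, α)` is a Hom-associative color algebra. -/
def IsHomAssociativeColor (ℬ : G → Submodule K V) (ε : G → G → K)
    (μ : V →ₗ[K] V →ₗ[K] V) (α : V →ₗ[K] V) : Prop :=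
  IsBicharacter ε ∧ IsEvenBilinear ℬ μ ∧ IsEvenLinear ℬ α ∧
    ∀ ⦃a b c : G⦄ ⦃x y z : V⦄, x ∈ ℬ a → y ∈ ℬ b → z ∈ ℬ c →
      μ (α x) (μ y z) = μ (μ x y) (α z)

/-- `(V, br, ε, α)` is a Hom-Lie color algebra. -/
def IsHomLieColor (ℬ : G → Submodule K V) (ε : G → G → K)
    (br : V →ₗ[K] V →ₗ[K] V) (α : V →ₗ[K] V) : Prop :=
  IsBicharacter ε ∧ IsEvenBilinear ℬ br ∧ IsEvenLinear ℬ α ∧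
    (∀ ⦃a b : G⦄ ⦃x y : V⦄, x ∈ ℬ a → y ∈ ℬ b → br x y = -(ε a b • br y x)) ∧
    (∀ ⦃a b c : G⦄ ⦃x y z : V⦄, x ∈ ℬ a → y ∈ ℬ b → z ∈ ℬ c →
      ε c a • br (α x) (br y z) + ε a b • br (α y) (br z x) +
        ε b c • br (α z) (br x y) = 0)

/-- `(V, μ, br, ε, α)` is a Hom-Poisson color algebra. -/
def IsHomPoissonColor (ℬ : G → Submodule K V) (ε : G → G → K)
    (μ br : V →ₗ[K] V →ₗ[K] V) (α : V →ₗ[K] V) : Prop :=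
  IsHomAssociativeColor ℬ ε μ α ∧ IsHomLieColor ℬ ε br α ∧
    ∀ ⦃a b c : G⦄ ⦃x y z : V⦄, x ∈ ℬ a → y ∈ ℬ b → z ∈ ℬ c →
      br (α x) (μ y z) = μ (br x y) (α z) + ε a b • μ (α y) (br x z)

/-- Induction principle for the tensor grading. -/
lemma ten_ind {K G A P : Type*} [Field K] [AddCommGroup G]
    [AddCommGroup A] [Module K A] [AddCommGroup P] [Module K P]
    (ℬA : G → Submodule K A) (ℬP : G → Submodule K P) {g : G} {t : A ⊗[K] P}
    (ht : t ∈ ⨆ p : {p : G × G // p.1 + p.2 = g},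
      Submodule.map₂ (TensorProduct.mk K A P) (ℬA p.1.1) (ℬP p.1.2))
    {Q : A ⊗[K] P → Prop} (h0 : Q 0) (hadd : ∀ s t, Q s → Q t → Q (s + t))
    (hsmul : ∀ (c : K) t, Q t → Q (c • t))
    (hp : ∀ p₁ p₂, p₁ + p₂ = g → ∀ a ∈ ℬA p₁, ∀ x ∈ ℬP p₂, Q (a ⊗ₜ[K] x)) :
    Q t := by
  refine Submodule.iSup_induction (motive := Q) _ ht (fun i s hs => ?_) h0 hadd
  obtain ⟨⟨p₁, p₂⟩, hpp⟩ := i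
  rw [Submodule.map₂_eq_span_image2] at hs
  refine Submodule.span_induction (fun u hu => ?_) h0
    (fun u v _ _ hQu hQv => hadd u v hQu hQv) (fun c u _ hQu => hsmul c u hQu) hs
  obtain ⟨a, ha, x, hx, rfl⟩ := hu
  exact hp p₁ p₂ hpp a ha x hx

/-- the tensor product of a commutative Hom-associative color
algebra `A` and a Hom-Poisson color algebra `P`, graded by
`(A ⊗ P)_g = ⊕_{a + x = g} A_a ⊗ P_x`, with
`(a ⊗ x)(b ⊗ y) = ε(x, b) (a·b) ⊗ (x ∗ y)`,
`{a ⊗ x, b ⊗ y} = ε(x, b) (a·b) ⊗ [x, y]` and `α = α_A ⊗ α_P`, is a Hom-Poisson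
color algebra. -/
theorem stmt12 {A P : Type*} [AddCommGroup A] [Module K A]
    [AddCommGroup P] [Module K P]
    (ℬA : G → Submodule K A) (ℬP : G → Submodule K P) (ε : G → G → K)
    (μA : A →ₗ[K] A →ₗ[K] A) (αA : A →ₗ[K] A)
    (hA : IsHomAssociativeColor ℬA ε μA αA)
    (hcomm : ∀ ⦃a b : G⦄ ⦃x y : A⦄, x ∈ ℬA a → y ∈ ℬA b →
      μA x y = ε a b • μA y x)
    (μP brP : P →ₗ[K] P →ₗ[K] P) (αP : P →ₗ[K] P)
    (hP : IsHomPoissonColor ℬP ε μP brP αP)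
    (m br : (A ⊗[K] P) →ₗ[K] (A ⊗[K] P) →ₗ[K] (A ⊗[K] P))
    (hm : ∀ ⦃ga gx gb gy : G⦄ ⦃a b : A⦄ ⦃x y : P⦄,
      a ∈ ℬA ga → x ∈ ℬP gx → b ∈ ℬA gb → y ∈ ℬP gy →
      m (a ⊗ₜ[K] x) (b ⊗ₜ[K] y) = ε gx gb • (μA a b ⊗ₜ[K] μP x y))
    (hbr : ∀ ⦃ga gx gb gy : G⦄ ⦃a b : A⦄ ⦃x y : P⦄,
      a ∈ ℬA ga → x ∈ ℬP gx → b ∈ ℬA gb → y ∈ ℬP gy →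
      br (a ⊗ₜ[K] x) (b ⊗ₜ[K] y) = ε gx gb • (μA a b ⊗ₜ[K] brP x y)) :
    IsHomPoissonColor
      (fun g => ⨆ p : {p : G × G // p.1 + p.2 = g},
        Submodule.map₂ (TensorProduct.mk K A P) (ℬA p.1.1) (ℬP p.1.2))
      ε m br (TensorProduct.map αA αP) := by
  obtain ⟨εbi, hAe, hAα, hAas⟩ := hA
  obtain ⟨⟨-, hPe, hPα, hPas⟩, ⟨-, hbe, -, hsk, hjac⟩, hlei⟩ := hP
  obtain ⟨hne, hsw, hεr, hεl⟩ := εbi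
  have hinv : ∀ a b : G, ε b a = (ε a b)⁻¹ := fun a b =>
    eq_inv_of_mul_eq_one_right (hsw a b)
  set ℬ : G → Submodule K (A ⊗[K] P) := fun g =>
    ⨆ p : {p : G × G // p.1 + p.2 = g},
      Submodule.map₂ (TensorProduct.mk K A P) (ℬA p.1.1) (ℬP p.1.2) with hℬ
  have memp : ∀ {p₁ p₂ g : G} {a : A} {x : P}, p₁ + p₂ = g →
      a ∈ ℬA p₁ → x ∈ ℬP p₂ → a ⊗ₜ[K] x ∈ ℬ g := by
    intro p₁ p₂ g a x h ha hx
    exact Submodule.mem_iSup_of_mem ⟨(p₁, p₂), h⟩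
      (Submodule.apply_mem_map₂ _ ha hx)
  -- evenness of a bilinear map defined by hm-style formulas
  have evenOf : ∀ (f : (A ⊗[K] P) →ₗ[K] (A ⊗[K] P) →ₗ[K] (A ⊗[K] P))
      (fP : P →ₗ[K] P →ₗ[K] P),
      (∀ ⦃ga gx gb gy : G⦄ ⦃a b : A⦄ ⦃x y : P⦄,
        a ∈ ℬA ga → x ∈ ℬP gx → b ∈ ℬA gb → y ∈ ℬP gy →
        f (a ⊗ₜ[K] x) (b ⊗ₜ[K] y) = ε gx gb • (μA a b ⊗ₜ[K] fP x y)) →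
      (∀ ⦃a b : G⦄ ⦃x y : P⦄, x ∈ ℬP a → y ∈ ℬP b → fP x y ∈ ℬP (a + b)) →
      IsEvenBilinear ℬ f := by
    intro f fP hf hfP ga gb t u ht hu
    refine ten_ind ℬA ℬP (Q := fun t => f t u ∈ ℬ (ga + gb)) ht ?_ ?_ ?_ ?_
    · simp
    · intro s t hs ht'; simp only [map_add, LinearMap.add_apply]
      exact add_mem hs ht'
    · intro c s hs; simp only [map_smul, LinearMap.smul_apply]
      exact Submodule.smul_mem _ _ hs
    · intro p₁ p₂ hpp a ha x hx
      refine ten_ind ℬA ℬP (Q := fun u => f (a ⊗ₜ[K] x) u ∈ ℬ (ga + gb)) hu ?_ ?_ ?_ ?_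
      · simp
      · intro s t hs ht'; simp only [map_add]; exact add_mem hs ht'
      · intro c s hs; simp only [map_smul]; exact Submodule.smul_mem _ _ hs
      · intro q₁ q₂ hqq b hb y hy
        rw [hf ha hx hb hy]
        refine Submodule.smul_mem _ _ (memp ?_ (hAe ha hb) (hfP hx hy))
        rw [← hpp, ← hqq]; abel
  have meven : IsEvenBilinear ℬ m := evenOf m μP hm hPe
  have breven : IsEvenBilinear ℬ br := evenOf br brP hbr hbe
  have αeven : IsEvenLinear ℬ (TensorProduct.map αA αP) := by
    intro g t ht
    refine ten_ind ℬA ℬP (Q := fun t => TensorProduct.map αA αP t ∈ ℬ g) ht ?_ ?_ ?_ ?_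
    · simp
    · intro s t hs ht'; simp only [map_add]; exact add_mem hs ht'
    · intro c s hs; simp only [map_smul]; exact Submodule.smul_mem _ _ hs
    · intro p₁ p₂ hpp a ha x hx
      rw [TensorProduct.map_tmul]
      exact memp hpp (hAα ha) (hPα hx)
  refine ⟨⟨⟨hne, hsw, hεr, hεl⟩, meven, αeven, ?_⟩,
    ⟨⟨hne, hsw, hεr, hεl⟩, breven, αeven, ?_, ?_⟩, ?_⟩
  · -- Hom-associativity
    intro ga gb gc t u v ht hu hv
    refine ten_ind ℬA ℬP (Q := fun t => m (TensorProduct.map αA αP t) (m u v)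
        = m (m t u) (TensorProduct.map αA αP v)) ht ?_ ?_ ?_ ?_
    · simp
    · intro s t hs ht'
      simp only [map_add, LinearMap.add_apply]
      rw [hs, ht']
    · intro c s hs
      simp only [map_smul, LinearMap.smul_apply]
      rw [hs]
    intro p₁ p₂ hga a ha x hx
    refine ten_ind ℬA ℬP (Q := fun u => m (TensorProduct.map αA αP (a ⊗ₜ[K] x)) (m u v)
        = m (m (a ⊗ₜ[K] x) u) (TensorProduct.map αA αP v)) hu ?_ ?_ ?_ ?_
    · simp
    · intro s t hs ht'
      simp only [map_add, LinearMap.add_apply]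
      rw [hs, ht']
    · intro c s hs
      simp only [map_smul, LinearMap.smul_apply]
      rw [hs]
    intro q₁ q₂ hgb b hb y hy
    refine ten_ind ℬA ℬP (Q := fun v => m (TensorProduct.map αA αP (a ⊗ₜ[K] x))
        (m (b ⊗ₜ[K] y) v)
        = m (m (a ⊗ₜ[K] x) (b ⊗ₜ[K] y)) (TensorProduct.map αA αP v)) hv ?_ ?_ ?_ ?_
    · simp
    · intro s t hs ht'
      simp only [map_add, LinearMap.add_apply]
      rw [hs, ht']
    · intro c s hs
      simp only [map_smul, LinearMap.smul_apply]
      rw [hs]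
    intro r₁ r₂ hgc c hc z hz
    simp only [TensorProduct.map_tmul, hm hb hy hc hz, hm ha hx hb hy, map_smul,
      LinearMap.smul_apply,
      hm (hAα ha) (hPα hx) (hAe hb hc) (hPe hy hz),
      hm (hAe ha hb) (hPe hx hy) (hAα hc) (hPα hz),
      hAas ha hb hc, hPas hx hy hz]
    match_scalars
    all_goals try simp only [hεl, hεr]
    all_goals try field_simp
    all_goals try ring
  · -- skew-symmetry
    intro ga gb t u ht hu
    refine ten_ind ℬA ℬP (Q := fun t => br t u = -(ε ga gb • br u t)) ht ?_ ?_ ?_ ?_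
    · simp
    · intro s t hs ht'
      simp only [map_add, LinearMap.add_apply, smul_add, neg_add]
      rw [hs, ht']
    · intro c s hs
      simp only [map_smul, LinearMap.smul_apply]
      rw [hs, smul_neg, smul_comm]
    intro p₁ p₂ hga a ha x hx
    refine ten_ind ℬA ℬP (Q := fun u => br (a ⊗ₜ[K] x) u
        = -(ε ga gb • br u (a ⊗ₜ[K] x))) hu ?_ ?_ ?_ ?_
    · simp
    · intro s t hs ht'
      simp only [map_add, LinearMap.add_apply, smul_add, neg_add]
      rw [hs, ht']
    · intro c s hs
      simp only [map_smul, LinearMap.smul_apply]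
      rw [hs, smul_neg, smul_comm]
    intro q₁ q₂ hgb b hb y hy
    subst hga hgb
    rw [hbr ha hx hb hy, hbr hb hy ha hx, hcomm ha hb, hsk hx hy]
    simp only [TensorProduct.tmul_neg, TensorProduct.tmul_smul, smul_neg,
      ← TensorProduct.smul_tmul']
    match_scalars
    all_goals try simp only [hεl, hεr, hinv q₂ p₁]
    all_goals try field_simp [hne q₂ p₁]
    all_goals try ring
  · -- Jacobi
    intro ga gb gc t u v ht hu hv
    refine ten_ind ℬA ℬP (Q := fun t =>
        ε gc ga • br (TensorProduct.map αA αP t) (br u v) +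
          ε ga gb • br (TensorProduct.map αA αP u) (br v t) +
          ε gb gc • br (TensorProduct.map αA αP v) (br t u) = 0) ht ?_ ?_ ?_ ?_
    · simp
    · intro s t hs ht'
      have h := congrArg₂ (· + ·) hs ht'
      simp only [add_zero] at h
      simp only [map_add, LinearMap.add_apply, smul_add]
      rw [← h]; abel
    · intro c s hs
      have h := congrArg (c • ·) hs
      simp only [smul_add, smul_zero, smul_comm c] at h
      simpa only [map_smul, LinearMap.smul_apply] using h
    intro p₁ p₂ hga a ha x hx
    refine ten_ind ℬA ℬP (Q := fun u =>
        ε gc ga • br (TensorProduct.map αA αP (a ⊗ₜ[K] x)) (br u v) +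
          ε ga gb • br (TensorProduct.map αA αP u) (br v (a ⊗ₜ[K] x)) +
          ε gb gc • br (TensorProduct.map αA αP v) (br (a ⊗ₜ[K] x) u) = 0) hu ?_ ?_ ?_ ?_
    · simp
    · intro s t hs ht'
      have h := congrArg₂ (· + ·) hs ht'
      simp only [add_zero] at h
      simp only [map_add, LinearMap.add_apply, smul_add]
      rw [← h]; abel
    · intro c s hs
      have h := congrArg (c • ·) hs
      simp only [smul_add, smul_zero, smul_comm c] at h
      simpa only [map_smul, LinearMap.smul_apply] using h
    intro q₁ q₂ hgb b hb y hy
    refine ten_ind ℬA ℬP (Q := fun v =>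
        ε gc ga • br (TensorProduct.map αA αP (a ⊗ₜ[K] x)) (br (b ⊗ₜ[K] y) v) +
          ε ga gb • br (TensorProduct.map αA αP (b ⊗ₜ[K] y)) (br v (a ⊗ₜ[K] x)) +
          ε gb gc • br (TensorProduct.map αA αP v)
            (br (a ⊗ₜ[K] x) (b ⊗ₜ[K] y)) = 0) hv ?_ ?_ ?_ ?_
    · simp
    · intro s t hs ht'
      have h := congrArg₂ (· + ·) hs ht'
      simp only [add_zero] at h
      simp only [map_add, LinearMap.add_apply, smul_add]
      rw [← h]; abel
    · intro c s hs
      have h := congrArg (c • ·) hs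
      simp only [smul_add, smul_zero, smul_comm c] at h
      simpa only [map_smul, LinearMap.smul_apply] using h
    intro r₁ r₂ hgc c hc z hz
    subst hga hgb hgc
    have hj := hjac hx hy hz
    simp only [TensorProduct.map_tmul, hbr hb hy hc hz, hbr hc hz ha hx, hbr ha hx hb hy,
      map_smul, LinearMap.smul_apply,
      hbr (hAα ha) (hPα hx) (hAe hb hc) (hbe hy hz),
      hbr (hAα hb) (hPα hy) (hAe hc ha) (hbe hz hx),
      hbr (hAα hc) (hPα hz) (hAe ha hb) (hbe hx hy)]
    simp only [hcomm hc ha, hAas hb ha hc, hcomm hb ha, hAas ha hb hc,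
      hcomm (hAα hc) (hAe ha hb), map_smul, LinearMap.smul_apply,
      ← TensorProduct.smul_tmul', TensorProduct.tmul_smul]
    rw [show (0 : A ⊗[K] P) = (ε r₁ p₁ * ε r₂ p₁ * ε q₂ r₁ * ε p₂ q₁) •
        ((μA (μA a b) (αA c)) ⊗ₜ[K]
          (ε r₂ p₂ • brP (αP x) (brP y z) + ε p₂ q₂ • brP (αP y) (brP z x) +
            ε q₂ r₂ • brP (αP z) (brP x y))) from by
      rw [hj, TensorProduct.tmul_zero, smul_zero]]
    simp only [TensorProduct.tmul_add, TensorProduct.tmul_smul, smul_add]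
    match_scalars
    all_goals try simp only [hεl, hεr, hinv p₂ r₁, hinv q₂ p₁, hinv q₁ p₁, hinv r₂ q₁,
      hinv r₁ q₁]
    all_goals try field_simp [hne p₂ r₁, hne q₂ p₁, hne q₁ p₁, hne r₂ q₁, hne r₁ q₁]
    all_goals try ring
  · -- Leibniz
    intro ga gb gc t u v ht hu hv
    refine ten_ind ℬA ℬP (Q := fun t =>
        br (TensorProduct.map αA αP t) (m u v) =
          m (br t u) (TensorProduct.map αA αP v) +
            ε ga gb • m (TensorProduct.map αA αP u) (br t v)) ht ?_ ?_ ?_ ?_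
    · simp
    · intro s t hs ht'
      simp only [map_add, LinearMap.add_apply, smul_add]
      rw [hs, ht']; abel
    · intro c s hs
      simp only [map_smul, LinearMap.smul_apply]
      rw [hs, smul_add, smul_comm]
    intro p₁ p₂ hga a ha x hx
    refine ten_ind ℬA ℬP (Q := fun u =>
        br (TensorProduct.map αA αP (a ⊗ₜ[K] x)) (m u v) =
          m (br (a ⊗ₜ[K] x) u) (TensorProduct.map αA αP v) +
            ε ga gb • m (TensorProduct.map αA αP u) (br (a ⊗ₜ[K] x) v)) hu ?_ ?_ ?_ ?_
    · simp
    · intro s t hs ht'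
      simp only [map_add, LinearMap.add_apply, smul_add]
      rw [hs, ht']; abel
    · intro c s hs
      simp only [map_smul, LinearMap.smul_apply]
      rw [hs, smul_add, smul_comm]
    intro q₁ q₂ hgb b hb y hy
    refine ten_ind ℬA ℬP (Q := fun v =>
        br (TensorProduct.map αA αP (a ⊗ₜ[K] x)) (m (b ⊗ₜ[K] y) v) =
          m (br (a ⊗ₜ[K] x) (b ⊗ₜ[K] y)) (TensorProduct.map αA αP v) +
            ε ga gb • m (TensorProduct.map αA αP (b ⊗ₜ[K] y))
              (br (a ⊗ₜ[K] x) v)) hv ?_ ?_ ?_ ?_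
    · simp
    · intro s t hs ht'
      simp only [map_add, LinearMap.add_apply, smul_add]
      rw [hs, ht']; abel
    · intro c s hs
      simp only [map_smul, LinearMap.smul_apply]
      rw [hs, smul_add, smul_comm]
    intro r₁ r₂ hgc c hc z hz
    subst hga hgb hgc
    simp only [TensorProduct.map_tmul, hm hb hy hc hz, hbr ha hx hb hy, hbr ha hx hc hz,
      map_smul, LinearMap.smul_apply,
      hbr (hAα ha) (hPα hx) (hAe hb hc) (hPe hy hz),
      hm (hAe ha hb) (hbe hx hy) (hAα hc) (hPα hz),
      hm (hAα hb) (hPα hy) (hAe ha hc) (hbe hx hz),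
      hAas ha hb hc, hAas hb ha hc, hcomm hb ha,
      hlei hx hy hz, ← TensorProduct.smul_tmul',
      TensorProduct.tmul_add, TensorProduct.tmul_smul, smul_add]
    match_scalars
    all_goals try simp only [hεl, hεr, hinv q₂ p₁, hinv q₁ p₁]
    all_goals try field_simp [hne q₂ p₁, hne q₁ p₁]
    all_goals try ring
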